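/- Let (a, x) and (b, y) be pairs of coprime integers with 1 ≤ a ≤ x, 1 ≤ b ≤ y, and ay - bx = 1. Then (y+x, b+a)_q = (y, b)_q + q^{⌊b/a + 1⌋} · (x, a)_q. -/

import Mathlib

open Polynomial

/-- The `q`-integer `[c]_q = 1 + q + ⋯ + q^{c-1}` as a polynomial in `ℤ[q]`. -/
noncomputable def qInt (c : ℕ) : Polynomial ℤ := ∑ i ∈ Finset.range c, X ^ i

/-- The polynomial `(a, b)_q ∈ ℤ[q]` associated to a pair of coprime positive
integers: `(1, n)_q = (n, 1)_q = [n+1]_q`; if `a < b` then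
`(a,b)_q = (a-r, r)_q + q·(a, b-a)_q` with `r = b % a`; if `a > b` then
`(a,b)_q = (a-b, b)_q + q^⌈a/b⌉·(r, b-r)_q` with `r = a % b`.
(Values on non-coprime or zero inputs are junk.) -/
noncomputable def W : ℕ → ℕ → Polynomial ℤ
  | 1, b => qInt (b + 1)
  | a, 1 => qInt (a + 1)
  | 0, _ => 0
  | _, 0 => 0
  | a + 2, b + 2 =>
    if a < b then
      W (a + 2 - (b + 2) % (a + 2)) ((b + 2) % (a + 2)) + X * W (a + 2) (b - a)
    else
      W (a - b) (b + 2) +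
        X ^ ((a + 2 + (b + 2) - 1) / (b + 2)) *
          W ((a + 2) % (b + 2)) (b + 2 - (a + 2) % (b + 2))
  termination_by a b => a + b
  decreasing_by
  · have := Nat.mod_lt (b + 2) (show 0 < a + 2 by omega); omega
  · omega
  · omega
  · have := Nat.mod_lt (a + 2) (show 0 < b + 2 by omega); omega

/-- The sequence of digits of the negative continued fraction expansion
`x/a = [c₁, …, c_l]⁻` (each `cᵢ = ⌈·⌉` of the current fraction). By convention
`ncfDigits x 0 = []` (for `1/0 = ∞`) and `ncfDigits x 1 = [x]`. -/
def ncfDigits : ℕ → ℕ → List ℕ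
  | _, 0 => []
  | x, 1 => [x]
  | x, a + 2 =>
      (x + (a + 2) - 1) / (a + 2) ::
        ncfDigits (a + 2) ((x + (a + 2) - 1) / (a + 2) * (a + 2) - x)
  termination_by x a => a
  decreasing_by
    have := Nat.div_mul_le_self (x + (a + 2) - 1) (a + 2); omega

/-- The (coprime) numerator and denominator of the Morier-Genoud–Ovsienko
`q`-deformation of the negative continued fraction `[c₁, …, c_l]⁻`, computed by
the continuant recursion `(N, D) ↦ ([c]_q·N - q^{c-1}·D, N)`, with `(1, 0)` for
the empty list. -/
noncomputable def qCF : List ℕ → Polynomial ℤ × Polynomial ℤ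
  | [] => (1, 0)
  | c :: rest =>
      let p := qCF rest
      (qInt c * p.1 - X ^ (c - 1) * p.2, p.1)

/-- Numerator `N_q(x/a)` of the Morier-Genoud–Ovsienko `q`-rational `[x/a]_q`. -/
noncomputable def Nq (x a : ℕ) : Polynomial ℤ := (qCF (ncfDigits x a)).1

/-- Denominator `D_q(x/a)` of the Morier-Genoud–Ovsienko `q`-rational `[x/a]_q`. -/
noncomputable def Dq (x a : ℕ) : Polynomial ℤ := (qCF (ncfDigits x a)).2

/-- The normalized Jones polynomial `J_{x/a}(q) = q·N_q(x/a) + (1-q)·D_q(x/a)`. -/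
noncomputable def Jq (x a : ℕ) : Polynomial ℤ := X * Nq x a + (1 - X) * Dq x a

lemma W_one_left (b : ℕ) : W 1 b = qInt (b+1) := by
  match b with
  | 0 => delta W W._unary; rw [WellFounded.Nat.fix_eq]; try with_unfolding_all rfl
  | 1 => delta W W._unary; rw [WellFounded.Nat.fix_eq]; try with_unfolding_all rfl
  | n+2 => delta W W._unary; rw [WellFounded.Nat.fix_eq]; try with_unfolding_all rfl

lemma W_one_right (a : ℕ) : W a 1 = qInt (a+1) := by
  match a with
  | 0 => delta W W._unary; rw [WellFounded.Nat.fix_eq]; try with_unfolding_all rfl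
  | 1 => exact W_one_left 1
  | n+2 => delta W W._unary; rw [WellFounded.Nat.fix_eq]; try with_unfolding_all rfl

lemma W_dite (a b : ℕ) : W (a+2) (b+2) = dite (a < b)
    (fun _ => W (a + 2 - (b + 2) % (a + 2)) ((b + 2) % (a + 2)) + X * W (a + 2) (b - a))
    (fun _ => W (a - b) (b + 2) +
        X ^ ((a + 2 + (b + 2) - 1) / (b + 2)) *
          W ((a + 2) % (b + 2)) (b + 2 - (a + 2) % (b + 2))) := by
  conv_lhs => delta W W._unary
  rw [WellFounded.Nat.fix_eq]; try with_unfolding_all rfl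

/-- unfolding for `a < b` (both ≥ 2). -/
lemma W_lt {a b : ℕ} (ha : 2 ≤ a) (hb : a < b) :
    W a b = W (a - b % a) (b % a) + X * W a (b - a) := by
  obtain ⟨a', rfl⟩ : ∃ a', a = a' + 2 := ⟨a - 2, by omega⟩
  obtain ⟨b', rfl⟩ : ∃ b', b = b' + 2 := ⟨b - 2, by omega⟩
  have h1 : b' - a' = b' + 2 - (a' + 2) := by omega
  rw [W_dite, dif_pos (by omega : a' < b'), h1]

/-- unfolding for `b ≤ a` (both ≥ 2). -/
lemma W_gt {a b : ℕ} (hb : 2 ≤ b) (hab : b ≤ a) (hne : a ≠ b) :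
    W a b = W (a - b) b + X ^ ((a + b - 1) / b) * W (a % b) (b - a % b) := by
  obtain ⟨a', rfl⟩ : ∃ a', a = a' + 2 := ⟨a - 2, by omega⟩
  obtain ⟨b', rfl⟩ : ∃ b', b = b' + 2 := ⟨b - 2, by omega⟩
  have h1 : a' - b' = a' + 2 - (b' + 2) := by omega
  rw [W_dite, dif_neg (by omega : ¬ a' < b'), h1]

lemma qInt_succ (n : ℕ) : qInt (n+1) = qInt n + X^n := Finset.sum_range_succ _ _
lemma qInt_one : qInt 1 = 1 := by simp [qInt]
lemma qInt_succ' (n : ℕ) : qInt (n+1) = 1 + X * qInt n := by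
  rw [qInt, Finset.sum_range_succ', qInt, Finset.mul_sum]
  simp only [pow_succ, mul_comm]
  ring

lemma ndiv_helper {s : ℕ} (q r : ℕ) (hr : r < s) : (s*q + r)/s = q := by
  rw [Nat.mul_add_div (by omega : 0 < s), Nat.div_eq_of_lt hr]; omega

lemma nmod_helper {s : ℕ} (q r : ℕ) (hr : r < s) : (s*q + r) % s = r := by
  rw [Nat.mul_add_mod, Nat.mod_eq_of_lt hr]

/-- Key floor-division lemma for regime II. -/
lemma key_div {a x b y k : ℕ} (ha : 2 ≤ a) (hx : 1 ≤ x) (hkx : k*x < a) (hky : k*y ≤ b)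
    (h : a*y = b*x + 1) : (b - k*y)/(a - k*x) = b/a := by
  set t := b/a with ht
  set p := b % a with hp
  have hb : a * t + p = b := Nat.div_add_mod b a
  have hpa : p < a := Nat.mod_lt _ (by omega)
  have hp1 : 1 ≤ p := by
    rcases Nat.eq_zero_or_pos p with h0 | h1
    · exfalso
      obtain ⟨c, hc⟩ : a ∣ b := Nat.dvd_of_mod_eq_zero h0
      have hZ : (a:ℤ) * ((y:ℤ) - (c:ℤ)*(x:ℤ)) = 1 := by
        have h' : (a:ℤ)*y = (b:ℤ)*x + 1 := by exact_mod_cast h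
        have hc' : (b:ℤ) = a * c := by exact_mod_cast hc
        linear_combination h' + (x:ℤ) * hc'
      have : (a:ℤ) ∣ 1 := ⟨_, hZ.symm⟩
      have := Int.le_of_dvd one_pos this
      omega
    · exact h1
  -- w := y - t*x
  have htxy : t*x < y := by
    have h1 : a*(t*x) + (p*x + 1) = a*y := by
      have : (a*t + p)*x + 1 = b*x + 1 := by rw [hb]
      calc a*(t*x) + (p*x+1) = (a*t+p)*x + 1 := by ring
        _ = b*x + 1 := by rw [hb]
        _ = a*y := h.symm
    have hpx : 1 ≤ p*x + 1 := by omega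
    by_contra hc
    push_neg at hc
    have : a*y ≤ a*(t*x) := Nat.mul_le_mul_left a hc
    omega
  obtain ⟨w, hw1, hyw⟩ : ∃ w, 1 ≤ w ∧ y = t*x + w := ⟨y - t*x, by omega, by omega⟩
  have haw : a*w = p*x + 1 := by
    have h1 : a*y = a*(t*x) + a*w := by rw [hyw]; ring
    have h2 : b*x = a*(t*x) + p*x := by
      calc b*x = (a*t+p)*x := by rw [hb]
        _ = a*(t*x) + p*x := by ring
    omega
  have hwx : w ≤ x := by
    have h1 : (p+1)*x ≤ a*x := Nat.mul_le_mul_right x (by omega)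
    have h2 : (p+1)*x = p*x + x := by ring
    have h3 : a*w ≤ a*x := by omega
    exact Nat.le_of_mul_le_mul_left h3 (by omega)
  have hkw : k*w ≤ p := by
    have h1 : (k*x+1)*w ≤ a*w := Nat.mul_le_mul_right w (by omega)
    have h2 : (k*x+1)*w = (k*w)*x + w := by ring
    have h3 : (k*w)*x ≤ p*x := by omega
    exact Nat.le_of_mul_le_mul_right (by omega) (by omega : 0 < x)
  -- e := p - k*w, upper bound
  obtain ⟨e, hpe⟩ : ∃ e, p = k*w + e := ⟨p - k*w, by omega⟩
  obtain ⟨d, had⟩ : ∃ d, a = k*x + (d+1) := ⟨a - k*x - 1, by omega⟩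
  have hed : e < d + 1 := by
    -- x*e = w*(d+1) - 1 ≤ x*(d+1) - 1 < x*(d+1)
    have h1 : x*e + 1 = w*(d+1) := by
      have e1 : a*w = (k*x)*w + w*(d+1) := by rw [had]; ring
      have e2 : p*x = (k*w)*x + e*x := by rw [hpe]; ring
      have e3 : (k*x)*w = (k*w)*x := by ring
      have e4 : e*x = x*e := by ring
      omega
    have h2 : w*(d+1) ≤ x*(d+1) := Nat.mul_le_mul_right _ hwx
    have h3 : x*e < x*(d+1) := by omega
    exact Nat.lt_of_mul_lt_mul_left h3
  have hsub : b - k*y = (a - k*x)*(t) + e := by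
    have e1 : b = k*y + ((a - k*x)*t + e) := by
      have e2 : a - k*x = d+1 := by omega
      rw [e2, hyw, ← hb, hpe, had]; ring
    omega
  have e2 : a - k*x = d+1 := by omega
  rw [hsub, e2, show (d+1)*t + e = (d+1)*t + e from rfl, ndiv_helper t e (by omega)]

/-- Key floor-division lemma for regime I. -/
lemma key_div2 {a x b y n : ℕ} (ha : 2 ≤ a) (hxa : x < (n+1)*a) (hyb : y ≤ (n+1)*b)
    (h : a*y = b*x + 1) : ((n+1)*b - y)/((n+1)*a - x) = b/a := by
  have hx : 1 ≤ x := by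
    rcases Nat.eq_zero_or_pos x with h0 | h1
    · exfalso; rw [h0] at h; simp at h; omega
    · exact h1
  set t := b/a with ht
  set p := b % a with hp
  have hb : a * t + p = b := Nat.div_add_mod b a
  have hpa : p < a := Nat.mod_lt _ (by omega)
  have hp1 : 1 ≤ p := by
    rcases Nat.eq_zero_or_pos p with h0 | h1
    · exfalso
      obtain ⟨c, hc⟩ : a ∣ b := Nat.dvd_of_mod_eq_zero h0
      have hZ : (a:ℤ) * ((y:ℤ) - (c:ℤ)*(x:ℤ)) = 1 := by
        have h' : (a:ℤ)*y = (b:ℤ)*x + 1 := by exact_mod_cast h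
        have hc' : (b:ℤ) = a * c := by exact_mod_cast hc
        linear_combination h' + (x:ℤ) * hc'
      have : (a:ℤ) ∣ 1 := ⟨_, hZ.symm⟩
      have := Int.le_of_dvd one_pos this
      omega
    · exact h1
  have htxy : t*x < y := by
    have h1 : a*(t*x) + (p*x + 1) = a*y := by
      calc a*(t*x) + (p*x+1) = (a*t+p)*x + 1 := by ring
        _ = b*x + 1 := by rw [hb]
        _ = a*y := h.symm
    by_contra hc
    push_neg at hc
    have : a*y ≤ a*(t*x) := Nat.mul_le_mul_left a hc
    omega
  obtain ⟨w, hw1, hyw⟩ : ∃ w, 1 ≤ w ∧ y = t*x + w := ⟨y - t*x, by omega, by omega⟩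
  have haw : a*w = p*x + 1 := by
    have h1 : a*y = a*(t*x) + a*w := by rw [hyw]; ring
    have h2 : b*x = a*(t*x) + p*x := by
      calc b*x = (a*t+p)*x := by rw [hb]
        _ = a*(t*x) + p*x := by ring
    omega
  obtain ⟨a', ha'⟩ : ∃ a', (n+1)*a = x + (a' + 1) := ⟨(n+1)*a - x - 1, by omega⟩
  -- w ≤ (n+1)*p
  have hwnp : w ≤ (n+1)*p := by
    have h1 : p*x + p*(a'+1) = a*((n+1)*p) := by
      calc p*x + p*(a'+1) = p*(x + (a'+1)) := by ring
        _ = p*((n+1)*a) := by rw [← ha']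
        _ = a*((n+1)*p) := by ring
    have hq : 0 < p*(a'+1) := Nat.mul_pos (by omega) (by omega)
    have h2 : a*w ≤ a*((n+1)*p) := by omega
    exact Nat.le_of_mul_le_mul_left h2 (by omega)
  obtain ⟨e, hpe⟩ : ∃ e, (n+1)*p = w + e := ⟨(n+1)*p - w, by omega⟩
  have hed : e < a' + 1 := by
    -- a*e = p*(a'+1) - 1
    have h1 : a*e + 1 = p*(a'+1) := by
      have e1 : a*((n+1)*p) = a*w + a*e := by rw [hpe]; ring
      have e2 : p*x + p*(a'+1) = a*((n+1)*p) := by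
        calc p*x + p*(a'+1) = p*(x + (a'+1)) := by ring
          _ = p*((n+1)*a) := by rw [← ha']
          _ = a*((n+1)*p) := by ring
      omega
    have h2 : p*(a'+1) ≤ (a-1)*(a'+1) := Nat.mul_le_mul_right _ (by omega)
    have h3 : (a-1)*(a'+1) + (a'+1) = a*(a'+1) := by
      have e3 : a - 1 + 1 = a := by omega
      calc (a-1)*(a'+1) + (a'+1) = ((a-1)+1)*(a'+1) := by ring
        _ = a*(a'+1) := by rw [e3]
    have h4 : a*e < a*(a'+1) := by omega
    exact Nat.lt_of_mul_lt_mul_left h4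
  have hsub : (n+1)*b - y = ((n+1)*a - x)*t + e := by
    have e2 : (n+1)*a - x = a'+1 := by omega
    have e1 : (n+1)*b = y + ((a'+1)*t + e) := by
      have e4 : (n+1)*b = (n+1)*(a*t) + (n+1)*p := by rw [← hb]; ring
      have e5 : (n+1)*(a*t) = ((n+1)*a)*t := by ring
      have e6 : ((n+1)*a)*t = (x + (a'+1))*t := by rw [ha']
      have e7 : (x + (a'+1))*t = x*t + (a'+1)*t := by ring
      have e8 : t*x = x*t := by ring
      omega
    rw [e2]; omega
  have e2 : (n+1)*a - x = a'+1 := by omega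
  rw [hsub, e2, ndiv_helper t e (by omega)]

lemma qkey (m n : ℕ) : qInt (m+1) + X^(m+1) * qInt n = qInt m + X^m * qInt (n+1) := by
  rw [qInt_succ m, qInt_succ' n]; ring

/-- recursion step for fractions `(b*x+1)/b` (case a = 1). -/
lemma stepA {b : ℕ} (x : ℕ) (hb : 1 ≤ b) :
    W (b*x + b + 1) b = W (b*x + 1) b + X^(x+2) * qInt b := by
  rcases eq_or_lt_of_le hb with hb1 | hb2
  · subst hb1
    simp only [one_mul]
    rw [W_one_right, W_one_right, qInt_succ (x+2), qInt_one, mul_one]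
  · obtain ⟨β, rfl⟩ : ∃ β, b = β + 2 := ⟨b - 2, by omega⟩
    rw [W_gt (by omega) (by omega) (by omega)]
    have h1 : (β+2)*x + (β+2) + 1 - (β+2) = (β+2)*x + 1 := by omega
    have e2 : (β+2)*x + (β+2) + 1 = (β+2)*(x+1) + 1 := by ring
    have h2 : ((β+2)*x + (β+2) + 1) % (β+2) = 1 := by rw [e2, nmod_helper _ _ (by omega)]
    have e3 : (β+2)*(x+2) = (β+2)*x + (β+2) + (β+2) := by ring
    have e4 : (β+2)*x + (β+2) + 1 + (β+2) - 1 = (β+2)*(x+2) + 0 := by omega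
    have h3 : ((β+2)*x + (β+2) + 1 + (β+2) - 1)/(β+2) = x+2 := by
      rw [e4, ndiv_helper _ _ (by omega)]
    rw [h1, h2, h3, show (β+2) - 1 = β + 1 by omega, W_one_left]

/-- Farey identity, case a = 1 (so y = b*x + 1). -/
lemma lemA {b : ℕ} (hb : 1 ≤ b) : ∀ x : ℕ, W (b*x+1 + x) (b+1) = W (b*x+1) b + X^(b+1) * W x 1 := by
  intro x
  induction x with
  | zero =>
    simp only [Nat.mul_zero, Nat.zero_add, Nat.add_zero]
    rw [W_one_left, W_one_left, W_one_right, qInt_one, mul_one, qInt_succ]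
  | succ x ihx =>
    have e1 : b*(x+1)+1 + (x+1) = (b+1)*x + (b+1) + 1 := by ring
    have e2 : (b+1)*x + 1 = b*x+1 + x := by ring
    have e3 : b*(x+1)+1 = b*x + b + 1 := by ring
    rw [e1, stepA x (by omega), e2, ihx, e3, stepA x hb, W_one_right, W_one_right]
    rw [qInt_succ (x+1), qInt_succ b]
    ring

/-- `W c (c+1) = qInt c + X * qInt (c+1)`. -/
lemma W_succ_pair {c : ℕ} (hc : 1 ≤ c) : W c (c+1) = qInt c + X * qInt (c+1) := by
  rcases eq_or_lt_of_le hc with h1 | h2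
  · rw [← h1, W_one_left, qInt_succ' 2, qInt_one]
  · rw [W_lt (by omega) (by omega)]
    have h3 : (c+1) % c = 1 := by
      rw [show c + 1 = c*1 + 1 by ring, nmod_helper _ _ (by omega)]
    rw [h3]
    simp only [Nat.add_sub_cancel_left]
    rw [W_one_right, W_one_right, show c - 1 + 1 = c by omega]

/-- recursion step for fractions `(a*y-1)/a` (case b = 1), `a ≥ 2`, `y ≥ 1`. -/
lemma stepB {a : ℕ} (y : ℕ) (ha : 2 ≤ a) (hy : 1 ≤ y) :
    W (a*y + a - 1) a = W (a*y - 1) a + X^(y+1) * qInt a := by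
  obtain ⟨α, rfl⟩ : ∃ α, a = α + 2 := ⟨a - 2, by omega⟩
  have hay : 2 ≤ (α+2)*y := le_trans (by omega) (Nat.le_mul_of_pos_right (α+2) hy)
  rw [W_gt (by omega) (by omega) (by omega)]
  have h1 : (α+2)*y + (α+2) - 1 - (α+2) = (α+2)*y - 1 := by omega
  have e2 : (α+2)*y + (α+2) - 1 = (α+2)*y + (α+1) := by omega
  have h2 : ((α+2)*y + (α+2) - 1) % (α+2) = α + 1 := by rw [e2, nmod_helper _ _ (by omega)]
  have e3 : (α+2)*(y+1) = (α+2)*y + (α+2) := by ring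
  have e4 : (α+2)*y + (α+2) - 1 + (α+2) - 1 = (α+2)*(y+1) + α := by omega
  have h3 : ((α+2)*y + (α+2) - 1 + (α+2) - 1)/(α+2) = y + 1 := by
    rw [e4, ndiv_helper _ _ (by omega)]
  rw [h1, h2, h3, show (α+2) - (α+1) = 1 by omega, W_one_right]

/-- Farey identity, case b = 1 (so x = a*y - 1), for `a ≥ 2`, shifted form. -/
lemma lemB {a : ℕ} (ha : 2 ≤ a) : ∀ y : ℕ,
    W ((a+1)*y + a) (a+1) = qInt (y+2) + X * W (a*y + a - 1) a := by
  intro y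
  induction y with
  | zero =>
    simp only [Nat.mul_zero, Nat.zero_add]
    obtain ⟨α, rfl⟩ : ∃ α, a = α + 2 := ⟨a - 2, by omega⟩
    rw [show (α+2) - 1 = α + 1 by omega]
    rw [show W (α+2) (α+2+1) = W (α+2) ((α+2)+1) from rfl, W_succ_pair (by omega)]
    rw [show W (α+1) (α+2) = W (α+1) ((α+1)+1) from rfl, W_succ_pair (by omega)]
    rw [qInt_succ' (α+2), qInt_succ' (α+1), qInt_succ' 1, qInt_one]
    ring
  | succ y ihy =>
    have hstep : W ((a+1)*(y+1) + a) (a+1)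
        = W ((a+1)*y + a) (a+1) + X^(y+2) * qInt (a+1) := by
      have e0 : (a+1)*(y+1) = (a+1)*y + (a+1) := by ring
      rw [W_gt (by omega) (by omega) (by omega)]
      have h1 : (a+1)*(y+1) + a - (a+1) = (a+1)*y + a := by omega
      have h2 : ((a+1)*(y+1) + a) % (a+1) = a := nmod_helper _ _ (by omega)
      have e1 : (a+1)*(y+2) = (a+1)*(y+1) + (a+1) := by ring
      have e2 : (a+1)*(y+1) + a + (a+1) - 1 = (a+1)*(y+2) + (a-1) := by omega
      have h3 : ((a+1)*(y+1) + a + (a+1) - 1)/(a+1) = y + 2 := by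
        rw [e2, ndiv_helper _ _ (by omega)]
      rw [h1, h2, h3, show a + 1 - a = 1 by omega, W_one_right]
    have e5 : a*(y+1) + a - 1 = a*y + a + a - 1 := by
      have : a*(y+1) = a*y + a := by ring
      omega
    have e6 : a*y + a + a - 1 = a*(y+1) + a - 1 := e5.symm
    have hsb : W (a*(y+1) + a - 1) a = W (a*y + a - 1) a + X^(y+2) * qInt a := by
      have e7 : a*(y+1) - 1 = a*y + a - 1 := by
        have : a*(y+1) = a*y + a := by ring
        omega
      rw [← e7, stepB (y+1) ha (by omega), e7]
    rw [hstep, ihy, hsb]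
    linear_combination -qkey (y+2) a


lemma qInt_two : qInt 2 = 1 + X := by
  rw [qInt_succ' 1, qInt_one, mul_one]

lemma hC1 : ∀ α : ℕ, W 2 (2*α+3) = qInt (α+2) + X * qInt (α+3) := by
  intro α
  induction α with
  | zero =>
    rw [show 2*0+3 = 3 by norm_num, W_lt (le_refl 2) (by omega)]
    norm_num
    rw [W_one_left, W_one_right]
  | succ α ih =>
    have e1 : 2*(α+1)+3 = 2*(α+2) + 1 := by ring
    rw [e1, W_lt (le_refl 2) (by omega), nmod_helper _ _ (by omega)]
    rw [show (2:ℕ) - 1 = 1 by norm_num, W_one_right]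
    rw [show 2*(α+2)+1-2 = 2*α+3 by omega, ih]
    linear_combination qInt_two - qInt_succ' (α+2) - (X : Polynomial ℤ) * qInt_succ' (α+3)

lemma W_gtone {c : ℕ} (hc : 2 ≤ c) : W (c+1) c = qInt (c+1) + X^2 * qInt c := by
  rw [W_gt hc (by omega) (by omega)]
  have h2 : (c+1) % c = 1 := by rw [show c+1 = c*1+1 by ring, nmod_helper _ _ (by omega)]
  have h3 : (c+1+c-1)/c = 2 := by
    rw [show c+1+c-1 = c*2+0 by omega, ndiv_helper _ _ (by omega)]
  rw [h2, h3, show c+1-c = 1 by omega, W_one_left, W_one_left, show c-1+1 = c by omega]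

/-- Farey identity, case x = 1 (so b = a*y - 1), shifted form. -/
lemma lemC : ∀ α γ : ℕ,
    W (γ+2) ((α+1)*(γ+2) - 1) = W (γ+1) ((α+1)*(γ+1) - 1) + X^(γ+1) * qInt (α+2) := by
  intro α
  induction α with
  | zero =>
    intro γ
    simp only [Nat.zero_add, one_mul]
    match γ with
    | 0 =>
      rw [show (0:ℕ)+2-1 = 1 by norm_num, show (0:ℕ)+1-1 = 0 by norm_num,
        W_one_right, W_one_left]
      linear_combination qInt_succ' 2 - qInt_one
    | 1 =>
      rw [show (1:ℕ)+2-1 = 2 by norm_num, show (1:ℕ)+1-1 = 1 by norm_num]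
      rw [show (1:ℕ)+2 = 2+1 from rfl, W_gtone (le_refl 2), W_one_right]
    | (δ+2) =>
      rw [show (δ+2)+2-1 = δ+3 by omega, show (δ+2)+1-1 = δ+2 by omega]
      rw [show (δ+2)+2 = (δ+3)+1 from rfl, W_gtone (by omega : 2 ≤ δ+3)]
      rw [show (δ+2)+1 = (δ+2)+1 from rfl, W_gtone (by omega : 2 ≤ δ+2)]
      linear_combination qInt_succ (δ+3) + (X : Polynomial ℤ)^2 * qInt_succ (δ+2)
        - (X : Polynomial ℤ)^(δ+3) * qInt_two
  | succ α ih =>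
    intro γ
    match γ with
    | 0 =>
      show W 2 ((α+2)*2 - 1) = W 1 ((α+2)*1 - 1) + X^1 * qInt (α+3)
      have e1 : (α+2)*2 - 1 = 2*α+3 := by
        have : (α+2)*2 = 2*α+4 := by ring
        omega
      have e2 : (α+2)*1 - 1 = α+1 := by omega
      rw [e1, e2, hC1 α, W_one_left]
      ring
    | (g+1) =>
      show W (g+3) ((α+2)*(g+3) - 1) = W (g+2) ((α+2)*(g+2) - 1) + X^(g+2) * qInt (α+3)
      have hpos1 : g+3 ≤ (α+1)*(g+3) := Nat.le_mul_of_pos_left _ (by omega)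
      have hpos2 : g+2 ≤ (α+1)*(g+2) := Nat.le_mul_of_pos_left _ (by omega)
      have eB : (α+2)*(g+3) - 1 = (g+3)*(α+1) + (g+2) := by
        have h1 : (α+2)*(g+3) = (g+3)*(α+1) + (g+3) := by ring
        omega
      have eB' : (α+2)*(g+2) - 1 = (g+2)*(α+1) + (g+1) := by
        have h1 : (α+2)*(g+2) = (g+2)*(α+1) + (g+2) := by ring
        omega
      have eL : W (g+3) ((α+2)*(g+3) - 1)
          = qInt (g+3) + X * W (g+3) ((α+1)*(g+3) - 1) := by
        rw [eB]
        rw [W_lt (by omega) (by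
          have h1 : (g+3)*(α+1) = (α+1)*(g+3) := by ring
          omega)]
        rw [nmod_helper _ _ (by omega : g+2 < g+3)]
        rw [show g+3 - (g+2) = 1 by omega, W_one_left]
        rw [show (g+3)*(α+1) + (g+2) - (g+3) = (α+1)*(g+3) - 1 by
          have h1 : (g+3)*(α+1) = (α+1)*(g+3) := by ring
          omega]
      have eR : W (g+2) ((α+2)*(g+2) - 1)
          = qInt (g+2) + X * W (g+2) ((α+1)*(g+2) - 1) := by
        rw [eB']
        rw [W_lt (by omega) (by
          have h1 : (g+2)*(α+1) = (α+1)*(g+2) := by ring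
          omega)]
        rw [nmod_helper _ _ (by omega : g+1 < g+2)]
        rw [show g+2 - (g+1) = 1 by omega, W_one_left]
        rw [show (g+2)*(α+1) + (g+1) - (g+2) = (α+1)*(g+2) - 1 by
          have h1 : (g+2)*(α+1) = (α+1)*(g+2) := by ring
          omega]
      have IH : W (g+3) ((α+1)*(g+3) - 1)
          = W (g+2) ((α+1)*(g+2) - 1) + X^(g+2) * qInt (α+2) := ih (g+1)
      rw [eL, eR, IH]
      linear_combination qkey (g+2) (α+2)

/-- Farey identity, case y = 1 (so a = b*x + 1), for `x ≥ 2`. -/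
lemma lemD (x : ℕ) (hx : 2 ≤ x) : ∀ b : ℕ,
    W (x+1) (b*(x+1)+1) = qInt (b+1) + X * W x (b*x+1) := by
  intro b
  induction b with
  | zero =>
    simp only [Nat.zero_mul, Nat.zero_add]
    rw [W_one_right, W_one_right, qInt_one]
    linear_combination qInt_succ' (x+1)
  | succ b ih =>
    have h1 : x+1 ≤ (b+1)*(x+1) := Nat.le_mul_of_pos_left _ (by omega)
    have h2 : x ≤ (b+1)*x := Nat.le_mul_of_pos_left _ (by omega)
    have eL : W (x+1) ((b+1)*(x+1)+1) = qInt (x+1) + X * W (x+1) (b*(x+1)+1) := by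
      have e1 : (b+1)*(x+1)+1 = (x+1)*(b+1) + 1 := by ring
      rw [e1, W_lt (by omega) (by
        have h3 : (x+1)*(b+1) = (b+1)*(x+1) := by ring
        omega)]
      rw [nmod_helper _ _ (by omega : 1 < x+1)]
      rw [show x+1-1 = x by omega, W_one_right]
      rw [show (x+1)*(b+1) + 1 - (x+1) = b*(x+1)+1 by
        have h3 : (x+1)*(b+1) = b*(x+1) + (x+1) := by ring
        omega]
    have eR : W x ((b+1)*x+1) = qInt x + X * W x (b*x+1) := by
      have e2 : (b+1)*x+1 = x*(b+1) + 1 := by ring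
      rw [e2, W_lt (by omega) (by
        have h3 : x*(b+1) = (b+1)*x := by ring
        omega)]
      rw [nmod_helper _ _ (by omega : 1 < x)]
      rw [show x-1 = x-1 from rfl, W_one_right, show x-1+1 = x by omega]
      rw [show x*(b+1) + 1 - x = b*x+1 by
        have h3 : x*(b+1) = b*x + x := by ring
        omega]
    rw [eL, ih, eR]
    linear_combination qInt_succ' x - qInt_succ' (b+1)

lemma Sgen : ∀ N a x b y : ℕ, a+x+b+y ≤ N → 1 ≤ a → 1 ≤ x → 1 ≤ b → 1 ≤ y →
    a*y = b*x + 1 → W (y+x) (b+a) = W y b + X^(b/a+1) * W x a := by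
  intro N
  induction N with
  | zero => intro a x b y hN ha hx hb hy _; omega
  | succ N ih =>
    intro a x b y hN ha hx hb hy h
    rcases eq_or_lt_of_le ha with ha1 | ha2
    · -- a = 1
      subst ha1
      rw [one_mul] at h
      subst h
      rw [Nat.div_one]
      exact lemA hb x
    · rcases eq_or_lt_of_le hb with hb1 | hb2
      · -- b = 1, a ≥ 2
        subst hb1
        rw [one_mul] at h
        obtain ⟨γ, rfl⟩ : ∃ γ, y = γ+1 := ⟨y-1, by omega⟩
        have e0 : a*(γ+1) = a*γ + a := by ring
        obtain rfl : x = a*γ + (a-1) := by omega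
        have s1 : (γ+1) + (a*γ + (a-1)) = (a+1)*γ + a := by
          have e2 : (a+1)*γ = a*γ + γ := by ring
          omega
        have s2 : 1 + a = a + 1 := by omega
        have s3 : a*γ + (a-1) = a*γ + a - 1 := by omega
        have s4 : (1:ℕ)/a = 0 := Nat.div_eq_of_lt (by omega)
        rw [s1, s2, s3, s4, W_one_right]
        rw [show (0:ℕ)+1 = 1 from rfl, pow_one]
        linear_combination lemB ha2 γ
      · rcases eq_or_lt_of_le hx with hx1 | hx2
        · -- x = 1, a ≥ 2, b ≥ 2
          subst hx1
          rw [mul_one] at h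
          obtain ⟨γ, rfl⟩ : ∃ γ, y = γ+1 := ⟨y-1, by omega⟩
          obtain ⟨α, rfl⟩ : ∃ α, a = α+1 := ⟨a-1, by omega⟩
          have e0 : (α+1)*(γ+1) = (α+1)*γ + (α+1) := by ring
          obtain rfl : b = (α+1)*γ + α := by omega
          have s1 : (γ+1) + 1 = γ+2 := rfl
          have s2 : (α+1)*γ + α + (α+1) = (α+1)*(γ+2) - 1 := by
            have e2 : (α+1)*(γ+2) = (α+1)*γ + (α+1) + (α+1) := by ring
            omega
          have s3 : (α+1)*γ + α = (α+1)*(γ+1) - 1 := by omega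
          rw [s1, s2, ndiv_helper γ α (by omega), W_one_left]
          rw [s3]
          linear_combination lemC α γ
        · rcases eq_or_lt_of_le hy with hy1 | hy2
          · -- y = 1, rest ≥ 2
            subst hy1
            rw [mul_one] at h
            subst h
            have hbx : b ≤ b*x := by
              have := Nat.mul_le_mul_left b (show 1 ≤ x by omega)
              simpa using this
            have s4 : b/(b*x+1) = 0 := Nat.div_eq_of_lt (by omega)
            have s1 : 1 + x = x + 1 := by omega
            have s2 : b + (b*x+1) = b*(x+1)+1 := by
              have e2 : b*(x+1) = b*x + b := by ring
              omega
            rw [s1, s2, s4, W_one_left, show (0:ℕ)+1 = 1 from rfl, pow_one]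
            exact lemD x hx2 b
          · -- a, b, x, y ≥ 2 : the two regimes
            have hd : a*(y+x) = x*(b+a) + 1 := by
              have e1 : a*(y+x) = a*y + a*x := by ring
              have e2 : x*(b+a) = b*x + x*a := by ring
              have e3 : a*x = x*a := by ring
              omega
            have hAB : y+x ≠ b+a := by
              intro hEq
              rw [hEq] at hd
              rcases le_or_gt a x with hax | hax
              · have h1 : a*(b+a) ≤ x*(b+a) := Nat.mul_le_mul_right _ hax
                omega
              · have h1 : (x+1)*(b+a) ≤ a*(b+a) := Nat.mul_le_mul_right _ (by omega)
                have e4 : (x+1)*(b+a) = x*(b+a) + (b+a) := by ring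
                omega
            rcases hAB.lt_or_gt with hlt | hgt
            · -- REGIME II : y+x < b+a
              set k := (b+a)/(y+x) with hk
              have hmod0 := Nat.div_add_mod (b+a) (y+x)
              rw [← hk] at hmod0
              have hmlt := Nat.mod_lt (b+a) (show 0 < y+x by omega)
              have hk1 : 1 ≤ k := by
                rcases Nat.eq_zero_or_pos k with h0 | h1
                · rw [h0] at hmod0; simp at hmod0; omega
                · exact h1
              have hkA : k*(y+x) ≤ b+a := by
                have e : (y+x)*k = k*(y+x) := by ring
                omega
              have hne2 : b+a ≠ k*(y+x) := by
                intro h0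
                rw [h0] at hd
                have e5 : x*(k*(y+x)) = (x*k)*(y+x) := by ring
                rcases le_or_gt (x*k) a with h6 | h6
                · have h7 : (x*k)*(y+x) ≤ a*(y+x) := Nat.mul_le_mul_right _ h6
                  rcases le_or_gt a (x*k) with h8 | h8
                  · have h9 : a*(y+x) ≤ (x*k)*(y+x) := Nat.mul_le_mul_right _ h8
                    omega
                  · have h9 : (x*k+1)*(y+x) ≤ a*(y+x) := Nat.mul_le_mul_right _ (by omega)
                    have e6 : (x*k+1)*(y+x) = (x*k)*(y+x) + (y+x) := by ring
                    omega
                · have h7 : (a+1)*(y+x) ≤ (x*k)*(y+x) := Nat.mul_le_mul_right _ (by omega)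
                  have e6 : (a+1)*(y+x) = a*(y+x) + (y+x) := by ring
                  have h8 : a*(y+x) ≤ (x*k)*(y+x) := by omega
                  omega
              have hklt : k*(y+x) < b+a := by omega
              have hkup : b+a < (k+1)*(y+x) := by
                have e7 : (k+1)*(y+x) = k*(y+x) + (y+x) := by ring
                have e8 : (y+x)*k = k*(y+x) := by ring
                omega
              have g2 : k*x < a := by
                by_contra hc; push_neg at hc
                have h1 : a*y ≤ (k*x)*y := Nat.mul_le_mul_right y hc
                have e1 : (k*x)*y = x*(k*y) := by ring
                have e2 : b*x = x*b := by ring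
                have h2 : x*b < x*(k*y) := by omega
                have h3 : b < k*y := Nat.lt_of_mul_lt_mul_left h2
                have e3 : k*(y+x) = k*y + k*x := by ring
                omega
              have g3 : a < (k+1)*x := by
                by_contra hc; push_neg at hc
                have h1 : ((k+1)*x)*y ≤ a*y := Nat.mul_le_mul_right y hc
                have e1 : ((k+1)*x)*y = x*((k+1)*y) := by ring
                have h2 : (k+1)*y ≤ b := by
                  by_contra hc2; push_neg at hc2
                  have h3 : x*(b+1) ≤ x*((k+1)*y) := Nat.mul_le_mul_left x hc2
                  have e2 : x*(b+1) = b*x + x := by ring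
                  omega
                have e3 : (k+1)*(y+x) = (k+1)*y + (k+1)*x := by ring
                omega
              have g4 : k*y < b := by
                by_contra hc; push_neg at hc
                have h1 : b*x ≤ (k*y)*x := Nat.mul_le_mul_right x hc
                have e1 : (k*y)*x = y*(k*x) := by ring
                have h2 : a*y ≤ y*(k*x) + 1 := by omega
                have h3 : y*(k*x) + y ≤ a*y := by
                  have h4 : y*(k*x+1) ≤ y*a := Nat.mul_le_mul_left y (by omega)
                  have e2 : y*(k*x+1) = y*(k*x) + y := by ring
                  have e3 : y*a = a*y := by ring
                  omega
                omega
              have g5 : b < (k+1)*y := by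
                by_contra hc; push_neg at hc
                have h1 : ((k+1)*y)*x ≤ b*x := Nat.mul_le_mul_right x hc
                have h2 : a*y ≤ ((k+1)*x)*y := Nat.mul_le_mul_right y (by omega)
                have e1 : ((k+1)*y)*x = ((k+1)*x)*y := by ring
                omega
              have hxa : x < a := by
                have h1 : 1*x ≤ k*x := Nat.mul_le_mul_right x hk1
                omega
              have hyb : y < b := by
                have h1 : 1*y ≤ k*y := Nat.mul_le_mul_right y hk1
                omega
              have ekx : (k+1)*x = k*x + x := by ring
              have eky : (k+1)*y = k*y + y := by ring
              have hmodB : (b+a) % (y+x) = (b - k*y) + (a - k*x) := by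
                rw [show b+a = (y+x)*k + ((b - k*y) + (a - k*x)) by
                  have e : (y+x)*k = k*y + k*x := by ring
                  omega]
                exact nmod_helper _ _ (by omega)
              have e1' : W (y+x) (b+a)
                  = W (((k+1)*y - b) + ((k+1)*x - a)) ((b - k*y) + (a - k*x))
                    + X * W (y+x) ((b-y)+(a-x)) := by
                rw [W_lt (by omega) hlt, hmodB]
                rw [show (y+x) - ((b - k*y) + (a - k*x)) = ((k+1)*y - b) + ((k+1)*x - a) by
                  omega]
                rw [show (b+a) - (y+x) = (b-y)+(a-x) by omega]
              have hmodby : b % y = b - k*y := by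
                conv_lhs => rw [show b = y*k + (b - k*y) by
                  have e : y*k = k*y := by ring
                  omega]
                exact nmod_helper _ _ (by omega)
              have e2' : W y b = W ((k+1)*y - b) (b - k*y) + X * W y (b-y) := by
                rw [W_lt (by omega) hyb, hmodby]
                rw [show y - (b - k*y) = (k+1)*y - b by omega]
              have hmodax : a % x = a - k*x := by
                conv_lhs => rw [show a = x*k + (a - k*x) by
                  have e : x*k = k*x := by ring
                  omega]
                exact nmod_helper _ _ (by omega)
              have e3' : W x a = W ((k+1)*x - a) (a - k*x) + X * W x (a-x) := by
                rw [W_lt (by omega) hxa, hmodax]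
                rw [show x - (a - k*x) = (k+1)*x - a by omega]
              have det1 : (a-x)*y = (b-y)*x + 1 := by
                have m1 : (a-x)*y + x*y = a*y := by
                  rw [← Nat.add_mul]; congr 1; omega
                have m2 : (b-y)*x + y*x = b*x := by
                  rw [← Nat.add_mul]; congr 1; omega
                have m3 : x*y = y*x := by ring
                omega
              have IH1 := ih (a-x) x (b-y) y (by omega) (by omega) (by omega) (by omega)
                (by omega) det1
              have det2 : (a - k*x)*((k+1)*y - b) = (b - k*y)*((k+1)*x - a) + 1 := by
                have hZ : (a:ℤ)*y = (b:ℤ)*x + 1 := by exact_mod_cast h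
                zify [g2.le, g4.le, g3.le, g5.le]
                linear_combination hZ
              have IH2 := ih (a - k*x) ((k+1)*x - a) (b - k*y) ((k+1)*y - b) (by omega)
                (by omega) (by omega) (by omega) (by omega) det2
              have hkey1 : (b-y)/(a-x) = b/a := by
                have := key_div (k := 1) (by omega : 2 ≤ a) (by omega : 1 ≤ x)
                  (by omega : 1*x < a) (by omega : 1*y ≤ b) h
                simpa using this
              have hkey2 : (b - k*y)/(a - k*x) = b/a :=
                key_div (by omega) (by omega) g2 g4.le h
              rw [e1', e2', e3', IH1, IH2, hkey1, hkey2]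
              ring
            · -- REGIME I : b+a < y+x
              set n := (y+x)/(b+a) with hn
              have hmod0 := Nat.div_add_mod (y+x) (b+a)
              rw [← hn] at hmod0
              have hmlt := Nat.mod_lt (y+x) (show 0 < b+a by omega)
              have hn1 : 1 ≤ n := by
                rcases Nat.eq_zero_or_pos n with h0 | h1
                · rw [h0] at hmod0; simp at hmod0; omega
                · exact h1
              have hnB : n*(b+a) ≤ y+x := by
                have e : (b+a)*n = n*(b+a) := by ring
                omega
              have hne2 : y+x ≠ n*(b+a) := by
                intro h0
                rw [h0] at hd
                have e5 : a*(n*(b+a)) = (a*n)*(b+a) := by ring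
                rcases le_or_gt (a*n) x with h6 | h6
                · have h7 : (a*n)*(b+a) ≤ x*(b+a) := Nat.mul_le_mul_right _ h6
                  omega
                · have h7 : (x+1)*(b+a) ≤ (a*n)*(b+a) := Nat.mul_le_mul_right _ (by omega)
                  have e6 : (x+1)*(b+a) = x*(b+a) + (b+a) := by ring
                  omega
              have hnlt : n*(b+a) < y+x := by omega
              have hnup : y+x < (n+1)*(b+a) := by
                have e7 : (n+1)*(b+a) = n*(b+a) + (b+a) := by ring
                have e8 : (b+a)*n = n*(b+a) := by ring
                omega
              have f2 : n*a < x := by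
                by_contra hc; push_neg at hc
                have h1 : b*x ≤ b*(n*a) := Nat.mul_le_mul_left b hc
                have h2 : y ≤ n*b := by
                  by_contra hc2; push_neg at hc2
                  have h3 : a*(n*b+1) ≤ a*y := Nat.mul_le_mul_left a hc2
                  have e1 : a*(n*b+1) = b*(n*a) + a := by ring
                  omega
                have e2 : n*(b+a) = n*b + n*a := by ring
                omega
              have f5 : x < (n+1)*a := by
                by_contra hc; push_neg at hc
                have h1 : b*((n+1)*a) ≤ b*x := Nat.mul_le_mul_left b hc
                have h2 : (n+1)*b + 1 ≤ y := by
                  by_contra hc2; push_neg at hc2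
                  have h3 : a*y ≤ a*((n+1)*b) := Nat.mul_le_mul_left a (by omega)
                  have e1 : a*((n+1)*b) = b*((n+1)*a) := by ring
                  omega
                have e2 : (n+1)*(b+a) = (n+1)*b + (n+1)*a := by ring
                omega
              have f4 : n*b < y := by
                by_contra hc; push_neg at hc
                have h1 : a*y ≤ a*(n*b) := Nat.mul_le_mul_left a hc
                have e1 : a*(n*b) = b*(n*a) := by ring
                have h2 : b*x < b*(n*a) := by omega
                have := Nat.lt_of_mul_lt_mul_left h2
                omega
              have f3 : y < (n+1)*b := by
                by_contra hc; push_neg at hc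
                have h1 : a*((n+1)*b) ≤ a*y := Nat.mul_le_mul_left a hc
                have e1 : a*((n+1)*b) = b*((n+1)*a) := by ring
                have h2 : b*(x+1) ≤ b*((n+1)*a) := Nat.mul_le_mul_left b (by omega)
                have e2 : b*(x+1) = b*x + b := by ring
                omega
              obtain ⟨u, hu1, hxu⟩ : ∃ u, 1 ≤ u ∧ x = n*a + u := ⟨x - n*a, by omega, by omega⟩
              obtain ⟨v, hv1, hyv⟩ : ∃ v, 1 ≤ v ∧ y = n*b + v := ⟨y - n*b, by omega, by omega⟩
              have ena : (n+1)*a = n*a + a := by ring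
              have enb : (n+1)*b = n*b + b := by ring
              have hua : u < a := by omega
              have hvb : v < b := by omega
              have hax' : a < x := by
                have h1 : 1*a ≤ n*a := Nat.mul_le_mul_right a hn1
                omega
              have hby' : b < y := by
                have h1 : 1*b ≤ n*b := Nat.mul_le_mul_right b hn1
                omega
              have hmodA : (y+x) % (b+a) = u + v := by
                rw [show y+x = (b+a)*n + (u+v) by
                  have e : (b+a)*n = n*b + n*a := by ring
                  omega]
                exact nmod_helper _ _ (by omega)
              have hdivA : (y+x+(b+a)-1)/(b+a) = n+1 := by
                rw [show y+x+(b+a)-1 = (b+a)*(n+1) + (u+v-1) by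
                  have e : (b+a)*(n+1) = n*b + n*a + b + a := by ring
                  omega]
                exact ndiv_helper _ _ (by omega)
              have e1 : W (y+x) (b+a)
                  = W ((y-b)+(x-a)) (b+a) + X^(n+1) * W (u+v) ((b-v)+(a-u)) := by
                rw [W_gt (by omega) (by omega) hAB, hmodA, hdivA]
                rw [show y+x - (b+a) = (y-b)+(x-a) by omega]
                rw [show (b+a) - (u+v) = (b-v)+(a-u) by omega]
              have hmody : y % b = v := by
                rw [show y = b*n + v by
                  have e : b*n = n*b := by ring
                  omega]
                exact nmod_helper _ _ hvb
              have hdivy : (y+b-1)/b = n+1 := by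
                rw [show y+b-1 = b*(n+1) + (v-1) by
                  have e : b*(n+1) = n*b + b := by ring
                  omega]
                exact ndiv_helper _ _ (by omega)
              have e2 : W y b = W (y-b) b + X^(n+1) * W v (b-v) := by
                rw [W_gt (by omega) (by omega) (by omega), hmody, hdivy]
              have hmodx : x % a = u := by
                rw [show x = a*n + u by
                  have e : a*n = n*a := by ring
                  omega]
                exact nmod_helper _ _ hua
              have hdivx : (x+a-1)/a = n+1 := by
                rw [show x+a-1 = a*(n+1) + (u-1) by
                  have e : a*(n+1) = n*a + a := by ring
                  omega]
                exact ndiv_helper _ _ (by omega)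
              have e3 : W x a = W (x-a) a + X^(n+1) * W u (a-u) := by
                rw [W_gt (by omega) (by omega) (by omega), hmodx, hdivx]
              have det1 : a*(y-b) = b*(x-a) + 1 := by
                have m1 : a*(y-b) + a*b = a*y := by
                  rw [← Nat.mul_add]; congr 1; omega
                have m2 : b*(x-a) + b*a = b*x := by
                  rw [← Nat.mul_add]; congr 1; omega
                have m3 : a*b = b*a := by ring
                omega
              have IH1 := ih a (x-a) b (y-b) (by omega) (by omega) (by omega) (by omega)
                (by omega) det1
              have det2 : (a-u)*v = (b-v)*u + 1 := by
                have hav : a*v = b*u + 1 := by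
                  have m1 : a*y = a*(n*b) + a*v := by rw [hyv]; ring
                  have m2 : b*x = b*(n*a) + b*u := by rw [hxu]; ring
                  have m3 : a*(n*b) = b*(n*a) := by ring
                  omega
                have m4 : (a-u)*v + u*v = a*v := by
                  rw [← Nat.add_mul]; congr 1; omega
                have m5 : (b-v)*u + v*u = b*u := by
                  rw [← Nat.add_mul]; congr 1; omega
                have m6 : u*v = v*u := by ring
                omega
              have IH2 := ih (a-u) u (b-v) v (by omega) (by omega) (by omega) (by omega)
                (by omega) det2
              have hkey : (b-v)/(a-u) = b/a := by
                rw [show b - v = (n+1)*b - y by omega, show a - u = (n+1)*a - x by omega]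
                exact key_div2 (by omega) f5 (by omega) h
              rw [e1, e2, e3, IH1, show u+v = v+u by omega, IH2, hkey]
              ring

/-- For Farey neighbors `x/a`, `y/b ≥ 1` (`ay - bx = 1`):
`(y+x, b+a)_q = (y, b)_q + q^{⌊b/a + 1⌋}·(x, a)_q` (here `⌊b/a + 1⌋ = b/a + 1`). -/
theorem W_farey_sum_swap (a x b y : ℕ)
    (ha : 1 ≤ a) (hax : a ≤ x) (hb : 1 ≤ b) (hby : b ≤ y)
    (h : a * y = b * x + 1) :
    W (y + x) (b + a) = W y b + X ^ (b / a + 1) * W x a := by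
  exact Sgen (a+x+b+y) a x b y le_rfl ha (le_trans ha hax) hb (le_trans hb hby) h
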